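/- Let Ω, ∂Ω, σ, n be as in the context. Let φ : ℝ^d → ℝ be C² on a neighborhood of the closure of Ω, satisfying −Δφ = E·φ on Ω and ∫_Ω φ(x)² dx = 1, and satisfying Dirichlet boundary conditions: φ = 0 on ∂Ω and the gradient of φ is normal on the boundary, i.e. ∇φ(x) = ⟨n(x),∇φ(x)⟩·n(x) for all x ∈ ∂Ω. Then ∫_{∂Ω} ⟨x,n(x)⟩·⟨n(x),∇φ(x)⟩² dσ(x) = 2E. -/

import Mathlib

open MeasureTheory
open scoped RealInnerProductSpace Classical

noncomputable section

/-- The Euclidean Laplacian: the sum of the second partial derivatives. -/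
def lap {d : ℕ} (u : EuclideanSpace ℝ (Fin d) → ℝ) (x : EuclideanSpace ℝ (Fin d)) : ℝ :=
  ∑ i, fderiv ℝ (fun y => fderiv ℝ u y (EuclideanSpace.single i (1:ℝ))) x
    (EuclideanSpace.single i (1:ℝ))

/-- The divergence: the sum of the partial derivatives of the components. -/
def divg {d : ℕ} (F : EuclideanSpace ℝ (Fin d) → EuclideanSpace ℝ (Fin d))
    (x : EuclideanSpace ℝ (Fin d)) : ℝ :=
  ∑ i, fderiv ℝ (fun y => ⟪F y, EuclideanSpace.single i (1:ℝ)⟫) x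
    (EuclideanSpace.single i (1:ℝ))

variable {d : ℕ}
local notation "E" => EuclideanSpace ℝ (Fin d)
local notation "sgl" i => EuclideanSpace.single i (1:ℝ)

lemma aux_inner_gradient (φ : E → ℝ) (x v : E) :
    ⟪gradient φ x, v⟫ = fderiv ℝ φ x v :=
  InnerProductSpace.toDual_symm_apply

lemma aux_clm_sum (L : EuclideanSpace ℝ (Fin d) →L[ℝ] ℝ) (v : E) :
    L v = ∑ i, v i * L (sgl i) := by
  have hv : v = ∑ i, v i • (sgl i) := by
    ext j
    rw [WithLp.ofLp_sum, Finset.sum_apply]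
    simp [EuclideanSpace.single_apply]
  conv_lhs => rw [hv]
  rw [map_sum]
  simp [smul_eq_mul]

variable {U : Set (EuclideanSpace ℝ (Fin d))} {φ : EuclideanSpace ℝ (Fin d) → ℝ}
  {x : EuclideanSpace ℝ (Fin d)}

lemma aux_df' (hU : IsOpen U) (hφ : ContDiffOn ℝ 2 φ U) (hx : x ∈ U) :
    DifferentiableAt ℝ (fderiv ℝ φ) x := by
  have h1 : ContDiffOn ℝ 1 (fderiv ℝ φ) U := hφ.fderiv_of_isOpen hU (by norm_num)
  exact ((h1 x hx).contDiffAt (hU.mem_nhds hx)).differentiableAt one_ne_zero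

lemma aux_dφ (hU : IsOpen U) (hφ : ContDiffOn ℝ 2 φ U) (hx : x ∈ U) :
    DifferentiableAt ℝ φ x :=
  ((hφ x hx).contDiffAt (hU.mem_nhds hx)).differentiableAt two_ne_zero

lemma aux_pd (hU : IsOpen U) (hφ : ContDiffOn ℝ 2 φ U) (hx : x ∈ U) (v w : E) :
    fderiv ℝ (fun y => fderiv ℝ φ y v) x w = fderiv ℝ (fderiv ℝ φ) x w v := by
  rw [fderiv_clm_apply (aux_df' hU hφ hx) (differentiableAt_const v)]
  simp

lemma aux_symm (hU : IsOpen U) (hφ : ContDiffOn ℝ 2 φ U) (hx : x ∈ U) (v w : E) :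
    fderiv ℝ (fderiv ℝ φ) x v w = fderiv ℝ (fderiv ℝ φ) x w v :=
  ((hφ x hx).contDiffAt (hU.mem_nhds hx)).isSymmSndFDerivAt (by simp) v w

lemma aux_dpd (hU : IsOpen U) (hφ : ContDiffOn ℝ 2 φ U) (hx : x ∈ U) (v : E) :
    DifferentiableAt ℝ (fun y => fderiv ℝ φ y v) x :=
  (aux_df' hU hφ hx).clm_apply (differentiableAt_const v)

lemma aux_lap (hU : IsOpen U) (hφ : ContDiffOn ℝ 2 φ U) (hx : x ∈ U) :
    lap φ x = ∑ i, fderiv ℝ (fderiv ℝ φ) x (sgl i) (sgl i) := by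
  unfold lap
  exact Finset.sum_congr rfl fun i _ => aux_pd hU hφ hx _ _

-- derivative of y ↦ fderiv φ y y
lemma aux_drad (hU : IsOpen U) (hφ : ContDiffOn ℝ 2 φ U) (hx : x ∈ U) (w : E) :
    fderiv ℝ (fun y => fderiv ℝ φ y y) x w
      = fderiv ℝ φ x w + fderiv ℝ (fderiv ℝ φ) x w x := by
  rw [fderiv_clm_apply (aux_df' hU hφ hx) differentiableAt_fun_id]
  simp

lemma aux_ddrad (hU : IsOpen U) (hφ : ContDiffOn ℝ 2 φ U) (hx : x ∈ U) :
    DifferentiableAt ℝ (fun y => fderiv ℝ φ y y) x :=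
  (aux_df' hU hφ hx).clm_apply differentiableAt_fun_id

-- N y = ∑ j (∂ⱼφ y)²
lemma aux_dN (hU : IsOpen U) (hφ : ContDiffOn ℝ 2 φ U) (hx : x ∈ U) :
    DifferentiableAt ℝ (fun y => ∑ j, (fderiv ℝ φ y (sgl j))^2) x := by
  apply DifferentiableAt.fun_sum
  intro j _
  exact (aux_dpd hU hφ hx _).pow 2

lemma aux_fderiv_N (hU : IsOpen U) (hφ : ContDiffOn ℝ 2 φ U) (hx : x ∈ U) (w : E) :
    fderiv ℝ (fun y => ∑ j, (fderiv ℝ φ y (sgl j))^2) x w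
      = ∑ j, 2 * fderiv ℝ φ x (sgl j) * fderiv ℝ (fderiv ℝ φ) x w (sgl j) := by
  rw [fderiv_fun_sum (fun j _ => (aux_dpd hU hφ hx _).fun_pow 2)]
  rw [ContinuousLinearMap.sum_apply]
  refine Finset.sum_congr rfl fun j _ => ?_
  have : (fun y => (fderiv ℝ φ y (sgl j))^2)
      = fun y => (fderiv ℝ φ y (sgl j)) * (fderiv ℝ φ y (sgl j)) := by
    funext y; ring
  rw [this, fderiv_fun_mul (aux_dpd hU hφ hx _) (aux_dpd hU hφ hx _)]
  simp [aux_pd hU hφ hx]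
  ring

lemma aux_dproj (i : Fin d) : DifferentiableAt ℝ (fun y : EuclideanSpace ℝ (Fin d) => y i) x :=
  (EuclideanSpace.proj (𝕜 := ℝ) i).differentiableAt

lemma aux_fderiv_proj (i : Fin d) (w : E) :
    fderiv ℝ (fun y : EuclideanSpace ℝ (Fin d) => y i) x w = w i := by
  have : (fun y : EuclideanSpace ℝ (Fin d) => y i) = EuclideanSpace.proj (𝕜 := ℝ) i := rfl
  rw [this, ContinuousLinearMap.fderiv]
  rfl


lemma aux_fderiv_sq (hU : IsOpen U) (hφ : ContDiffOn ℝ 2 φ U) (hx : x ∈ U) (w : E) :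
    fderiv ℝ (fun y => φ y * φ y) x w = 2 * (φ x * fderiv ℝ φ x w) := by
  rw [fderiv_fun_mul (aux_dφ hU hφ hx) (aux_dφ hU hφ hx)]
  simp
  ring

lemma aux_fderiv_halfproj (i : Fin d) (w : E) :
    fderiv ℝ (fun y : EuclideanSpace ℝ (Fin d) => 2⁻¹ * y i) x w = 2⁻¹ * w i := by
  rw [fderiv_const_mul (aux_dproj i)]
  rw [ContinuousLinearMap.smul_apply, aux_fderiv_proj]
  simp

lemma divg_F3 (hU : IsOpen U) (hφ : ContDiffOn ℝ 2 φ U) (hx : x ∈ U) :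
    divg (fun y => ((φ y)^2/2) • y) x
      = φ x * fderiv ℝ φ x x + (d:ℝ)/2 * (φ x)^2 := by
  unfold divg
  have h : ∀ i : Fin d, fderiv ℝ (fun y => ⟪((φ y)^2/2) • y, sgl i⟫) x (sgl i)
      = (φ x)^2/2 + x i * (φ x * fderiv ℝ φ x (sgl i)) := by
    intro i
    have hcomp : (fun y => ⟪((φ y)^2/2) • y, sgl i⟫)
        = fun y => (φ y * φ y) * (2⁻¹ * y i) := by
      funext y
      rw [real_inner_smul_left, EuclideanSpace.inner_single_right]
      simp
      ring
    rw [hcomp, fderiv_fun_mul ((aux_dφ hU hφ hx).fun_mul (aux_dφ hU hφ hx))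
      ((aux_dproj i).const_mul 2⁻¹)]
    rw [ContinuousLinearMap.add_apply, ContinuousLinearMap.smul_apply,
      ContinuousLinearMap.smul_apply, aux_fderiv_halfproj,
      aux_fderiv_sq hU hφ hx]
    simp [EuclideanSpace.single_apply]
    ring
  rw [Finset.sum_congr rfl fun i _ => h i, Finset.sum_add_distrib]
  have h2 : ∑ i, x i * (φ x * fderiv ℝ φ x (sgl i)) = φ x * fderiv ℝ φ x x := by
    rw [aux_clm_sum (fderiv ℝ φ x) x, Finset.mul_sum]
    exact Finset.sum_congr rfl fun i _ => by ring
  rw [h2, Finset.sum_const, Finset.card_univ]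
  simp
  ring

lemma divg_F1 (hU : IsOpen U) (hφ : ContDiffOn ℝ 2 φ U) (hx : x ∈ U) :
    divg (fun y => φ y • gradient φ y) x
      = (∑ i, (fderiv ℝ φ x (sgl i))^2) + φ x * lap φ x := by
  unfold divg
  have h : ∀ i : Fin d, fderiv ℝ (fun y => ⟪φ y • gradient φ y, sgl i⟫) x (sgl i)
      = (fderiv ℝ φ x (sgl i))^2 + φ x * fderiv ℝ (fderiv ℝ φ) x (sgl i) (sgl i) := by
    intro i
    have hcomp : (fun y => ⟪φ y • gradient φ y, sgl i⟫)
        = fun y => φ y * fderiv ℝ φ y (sgl i) := by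
      funext y; rw [real_inner_smul_left, aux_inner_gradient]
    rw [hcomp, fderiv_fun_mul (aux_dφ hU hφ hx) (aux_dpd hU hφ hx _)]
    simp [aux_pd hU hφ hx]
    ring
  rw [Finset.sum_congr rfl fun i _ => h i, Finset.sum_add_distrib, ← Finset.mul_sum,
    aux_lap hU hφ hx]

lemma divg_F2 (hU : IsOpen U) (hφ : ContDiffOn ℝ 2 φ U) (hx : x ∈ U) :
    divg (fun y => (fderiv ℝ φ y y) • gradient φ y
        - ((∑ j, (fderiv ℝ φ y (sgl j))^2)/2) • y) x
      = (1 - (d:ℝ)/2) * (∑ i, (fderiv ℝ φ x (sgl i))^2) + fderiv ℝ φ x x * lap φ x := by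
  unfold divg
  have h : ∀ i : Fin d,
      fderiv ℝ (fun y => ⟪(fderiv ℝ φ y y) • gradient φ y
          - ((∑ j, (fderiv ℝ φ y (sgl j))^2)/2) • y, sgl i⟫) x (sgl i)
      = fderiv ℝ φ x x * fderiv ℝ (fderiv ℝ φ) x (sgl i) (sgl i)
        + (fderiv ℝ φ x (sgl i))^2
        + fderiv ℝ φ x (sgl i) * fderiv ℝ (fderiv ℝ φ) x (sgl i) x
        - (∑ j, (fderiv ℝ φ x (sgl j))^2)/2
        - x i * ∑ j, fderiv ℝ φ x (sgl j) * fderiv ℝ (fderiv ℝ φ) x (sgl i) (sgl j) := by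
    intro i
    have hcomp : (fun y => ⟪(fderiv ℝ φ y y) • gradient φ y
          - ((∑ j, (fderiv ℝ φ y (sgl j))^2)/2) • y, sgl i⟫)
        = fun y => (fderiv ℝ φ y y) * (fderiv ℝ φ y (sgl i))
          - (∑ j, (fderiv ℝ φ y (sgl j))^2) * (2⁻¹ * y i) := by
      funext y
      rw [inner_sub_left, real_inner_smul_left, real_inner_smul_left,
        aux_inner_gradient, EuclideanSpace.inner_single_right]
      simp
      ring
    rw [hcomp, fderiv_fun_sub ((aux_ddrad hU hφ hx).fun_mul (aux_dpd hU hφ hx _))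
      ((aux_dN hU hφ hx).fun_mul ((aux_dproj i).const_mul 2⁻¹)),
      ContinuousLinearMap.sub_apply,
      fderiv_fun_mul (aux_ddrad hU hφ hx) (aux_dpd hU hφ hx _),
      fderiv_fun_mul (aux_dN hU hφ hx) ((aux_dproj i).const_mul 2⁻¹)]
    rw [ContinuousLinearMap.add_apply, ContinuousLinearMap.add_apply,
      ContinuousLinearMap.smul_apply, ContinuousLinearMap.smul_apply,
      ContinuousLinearMap.smul_apply, ContinuousLinearMap.smul_apply,
      aux_pd hU hφ hx, aux_drad hU hφ hx, aux_fderiv_halfproj,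
      aux_fderiv_N hU hφ hx]
    rw [Finset.mul_sum]
    simp [EuclideanSpace.single_apply]
    have hs : (2⁻¹:ℝ) * x i * (∑ j : Fin d, 2 * fderiv ℝ φ x (sgl j)
          * fderiv ℝ (fderiv ℝ φ) x (sgl i) (sgl j))
        = x i * ∑ j : Fin d, fderiv ℝ φ x (sgl j)
          * fderiv ℝ (fderiv ℝ φ) x (sgl i) (sgl j) := by
      rw [Finset.mul_sum, Finset.mul_sum]
      exact Finset.sum_congr rfl fun j _ => by ring
    rw [hs]
    simp only [Finset.mul_sum, ← mul_assoc]
    ring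
  rw [Finset.sum_congr rfl fun i _ => h i]
  have key : (∑ i, fderiv ℝ φ x (sgl i) * fderiv ℝ (fderiv ℝ φ) x (sgl i) x)
      = ∑ i, x i * ∑ j, fderiv ℝ φ x (sgl j)
        * fderiv ℝ (fderiv ℝ φ) x (sgl i) (sgl j) := by
    have e1 : ∀ i : Fin d, fderiv ℝ φ x (sgl i) * fderiv ℝ (fderiv ℝ φ) x (sgl i) x
        = ∑ j, x j * (fderiv ℝ φ x (sgl i)
            * fderiv ℝ (fderiv ℝ φ) x (sgl i) (sgl j)) := by
      intro i
      rw [aux_clm_sum (fderiv ℝ (fderiv ℝ φ) x (sgl i)) x, Finset.mul_sum]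
      exact Finset.sum_congr rfl fun j _ => by ring
    rw [Finset.sum_congr rfl fun i _ => e1 i, Finset.sum_comm]
    refine Finset.sum_congr rfl fun a _ => ?_
    rw [Finset.mul_sum]
    refine Finset.sum_congr rfl fun b _ => ?_
    rw [aux_symm hU hφ hx (sgl b) (sgl a)]
  simp only [Finset.sum_sub_distrib, Finset.sum_add_distrib]
  rw [key, ← Finset.mul_sum, ← aux_lap hU hφ hx, Finset.sum_const, Finset.card_univ]
  simp only [Fintype.card_fin, nsmul_eq_mul]
  ring

lemma aux_N_eq (φ : EuclideanSpace ℝ (Fin d) → ℝ) (x : EuclideanSpace ℝ (Fin d)) :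
    (∑ j, (fderiv ℝ φ x (sgl j))^2) = ⟪gradient φ x, gradient φ x⟫ := by
  have hp : ⟪gradient φ x, gradient φ x⟫ = ∑ i, ((gradient φ x) i)^2 := by
    rw [real_inner_self_eq_norm_sq, EuclideanSpace.norm_eq,
      Real.sq_sqrt (by positivity)]
    simp [sq_abs]
  rw [hp]
  refine Finset.sum_congr rfl fun j _ => ?_
  have : (gradient φ x) j = ⟪gradient φ x, sgl j⟫ := by
    rw [EuclideanSpace.inner_single_right]; simp
  rw [this, aux_inner_gradient]

lemma aux_cd_grad (hU : IsOpen U) (hφ : ContDiffOn ℝ 2 φ U) :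
    ContDiffOn ℝ 1 (gradient φ) U := by
  have h1 : ContDiffOn ℝ 1 (fderiv ℝ φ) U := hφ.fderiv_of_isOpen hU (by norm_num)
  exact (InnerProductSpace.toDual ℝ
    (EuclideanSpace ℝ (Fin d))).symm.contDiff.comp_contDiffOn h1

theorem dirichlet_boundary_normalization
    (d : ℕ) (hd : 2 ≤ d) (Ω : Set (EuclideanSpace ℝ (Fin d)))
    (hΩo : IsOpen Ω) (hΩb : Bornology.IsBounded Ω)
    (n : EuclideanSpace ℝ (Fin d) → EuclideanSpace ℝ (Fin d))
    (hGG : ∀ F : EuclideanSpace ℝ (Fin d) → EuclideanSpace ℝ (Fin d),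
      (∃ U, IsOpen U ∧ closure Ω ⊆ U ∧ ContDiffOn ℝ 1 F U) →
      (∫ x in Ω, divg F x) = ∫ x in frontier Ω, ⟪F x, n x⟫ ∂(μH[(d:ℝ) - 1]))
    (φ : EuclideanSpace ℝ (Fin d) → ℝ) (En : ℝ)
    (hφr : ∃ U, IsOpen U ∧ closure Ω ⊆ U ∧ ContDiffOn ℝ 2 φ U)
    (hHφ : ∀ x ∈ Ω, -lap φ x = En * φ x)
    (hφnorm : (∫ x in Ω, (φ x) ^ 2) = 1)
    (hφ0 : ∀ x ∈ frontier Ω, φ x = 0)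
    (hφn : ∀ x ∈ frontier Ω, gradient φ x = ⟪n x, gradient φ x⟫ • n x) :
    (∫ x in frontier Ω,
        ⟪x, n x⟫ * ⟪n x, gradient φ x⟫ ^ 2 ∂(μH[(d:ℝ) - 1])) = 2 * En := by
  obtain ⟨U, hUo, hUs, hφU⟩ := hφr
  have hΩU : Ω ⊆ U := fun x hx => hUs (subset_closure hx)
  have hfrU : frontier Ω ⊆ U := fun x hx => hUs (by
    rw [frontier] at hx; exact hx.1)
  have h1 : ContDiffOn ℝ 1 (fderiv ℝ φ) U := hφU.fderiv_of_isOpen hUo (by norm_num)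
  have hφ1 : ContDiffOn ℝ 1 φ U := hφU.of_le one_le_two
  have hgrad : ContDiffOn ℝ 1 (gradient φ) U := aux_cd_grad hUo hφU
  have hNcd : ContDiffOn ℝ 1
      (fun y => ∑ j, (fderiv ℝ φ y (sgl j))^2) U := by
    apply ContDiffOn.sum
    intro j _
    exact (h1.clm_apply contDiffOn_const).pow 2
  have hradcd : ContDiffOn ℝ 1 (fun y => fderiv ℝ φ y y) U :=
    h1.clm_apply contDiffOn_id
  -- smoothness of the three vector fields
  have cdF1 : ContDiffOn ℝ 1 (fun y => φ y • gradient φ y) U := hφ1.smul hgrad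
  have cdF2 : ContDiffOn ℝ 1 (fun y => (fderiv ℝ φ y y) • gradient φ y
      - ((∑ j, (fderiv ℝ φ y (sgl j))^2)/2) • y) U :=
    (hradcd.smul hgrad).sub ((hNcd.div_const 2).smul contDiffOn_id)
  have cdF3 : ContDiffOn ℝ 1 (fun y => ((φ y)^2/2) • y) U :=
    ((hφ1.pow 2).div_const 2).smul contDiffOn_id
  -- integrability
  have hcomp : IsCompact (closure Ω) :=
    Metric.isCompact_of_isClosed_isBounded isClosed_closure hΩb.closure
  have hInt : ∀ f : EuclideanSpace ℝ (Fin d) → ℝ, ContinuousOn f U →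
      IntegrableOn f Ω := fun f hf =>
    (((hf.mono hUs)).integrableOn_compact hcomp).mono_set subset_closure
  have hIntN := hInt _ hNcd.continuousOn
  have hIntp := hInt _ (hφ1.mul hradcd).continuousOn
  have hIntq : IntegrableOn (fun x => (φ x)^2) Ω :=
    hInt _ ((hφ1.pow 2).continuousOn)
  -- boundary of F1, F3 vanish
  have hfm : MeasurableSet (frontier Ω) := isClosed_frontier.measurableSet
  have hb1 : (∫ x in frontier Ω, ⟪φ x • gradient φ x, n x⟫ ∂(μH[(d:ℝ) - 1])) = 0 := by
    rw [MeasureTheory.setIntegral_congr_fun hfm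
      (g := fun _ => (0:ℝ)) (fun x hx => by
        rw [real_inner_smul_left, hφ0 x hx, zero_mul])]
    simp
  have hb3 : (∫ x in frontier Ω, ⟪((φ x)^2/2) • x, n x⟫ ∂(μH[(d:ℝ) - 1])) = 0 := by
    rw [MeasureTheory.setIntegral_congr_fun hfm
      (g := fun _ => (0:ℝ)) (fun x hx => by
        rw [real_inner_smul_left, hφ0 x hx]; ring)]
    simp
  -- lap on Ω
  have hlap : ∀ x ∈ Ω, lap φ x = -(En * φ x) := fun x hx => by
    have := hHφ x hx; linarith
  -- volume identities
  have hGG1 := hGG (fun y => φ y • gradient φ y) ⟨U, hUo, hUs, cdF1⟩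
  have hGG3 := hGG (fun y => ((φ y)^2/2) • y) ⟨U, hUo, hUs, cdF3⟩
  have hGG2 := hGG (fun y => (fderiv ℝ φ y y) • gradient φ y
      - ((∑ j, (fderiv ℝ φ y (sgl j))^2)/2) • y) ⟨U, hUo, hUs, cdF2⟩
  have hv1 : (∫ x in Ω, divg (fun y => φ y • gradient φ y) x)
      = ∫ x in Ω, ((∑ j, (fderiv ℝ φ x (sgl j))^2) - En * (φ x)^2) := by
    refine MeasureTheory.setIntegral_congr_fun hΩo.measurableSet fun x hx => ?_
    rw [divg_F1 hUo hφU (hΩU hx), hlap x hx]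
    ring
  have hv3 : (∫ x in Ω, divg (fun y => ((φ y)^2/2) • y) x)
      = ∫ x in Ω, (φ x * fderiv ℝ φ x x + (d:ℝ)/2 * (φ x)^2) := by
    refine MeasureTheory.setIntegral_congr_fun hΩo.measurableSet fun x hx => ?_
    rw [divg_F3 hUo hφU (hΩU hx)]
  have hv2 : (∫ x in Ω, divg (fun y => (fderiv ℝ φ y y) • gradient φ y
        - ((∑ j, (fderiv ℝ φ y (sgl j))^2)/2) • y) x)
      = ∫ x in Ω, ((1 - (d:ℝ)/2) * (∑ j, (fderiv ℝ φ x (sgl j))^2)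
          - En * (φ x * fderiv ℝ φ x x)) := by
    refine MeasureTheory.setIntegral_congr_fun hΩo.measurableSet fun x hx => ?_
    rw [divg_F2 hUo hφU (hΩU hx), hlap x hx]
    ring
  -- ∫ N = En
  have hA : (∫ x in Ω, ∑ j, (fderiv ℝ φ x (sgl j))^2) = En := by
    have h0 : (∫ x in Ω, ((∑ j, (fderiv ℝ φ x (sgl j))^2) - En * (φ x)^2)) = 0 := by
      rw [← hv1, hGG1, hb1]
    rw [MeasureTheory.integral_sub hIntN (hIntq.const_mul En),
      MeasureTheory.integral_const_mul, hφnorm] at h0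
    linarith
  -- ∫ p = -d/2
  have hP : (∫ x in Ω, φ x * fderiv ℝ φ x x) = -((d:ℝ)/2) := by
    have h0 : (∫ x in Ω, (φ x * fderiv ℝ φ x x + (d:ℝ)/2 * (φ x)^2)) = 0 := by
      rw [← hv3, hGG3, hb3]
    rw [MeasureTheory.integral_add hIntp (hIntq.const_mul ((d:ℝ)/2)),
      MeasureTheory.integral_const_mul, hφnorm] at h0
    linarith
  -- ∫ divg F2 = En
  have hE2 : (∫ x in frontier Ω, ⟪(fderiv ℝ φ x x) • gradient φ x
      - ((∑ j, (fderiv ℝ φ x (sgl j))^2)/2) • x, n x⟫ ∂(μH[(d:ℝ) - 1])) = En := by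
    rw [← hGG2, hv2,
      MeasureTheory.integral_sub ((hIntN.const_mul _)) (hIntp.const_mul En),
      MeasureTheory.integral_const_mul, MeasureTheory.integral_const_mul, hA, hP]
    ring
  -- pointwise boundary identity
  have hbd : ∀ x ∈ frontier Ω,
      ⟪x, n x⟫ * ⟪n x, gradient φ x⟫ ^ 2
        = 2 * ⟪(fderiv ℝ φ x x) • gradient φ x
            - ((∑ j, (fderiv ℝ φ x (sgl j))^2)/2) • x, n x⟫ := by
    intro x hx
    set c := ⟪n x, gradient φ x⟫ with hcdef
    have hg : gradient φ x = c • n x := hφn x hx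
    have hc : c = c * ⟪n x, n x⟫ := by
      conv_lhs => rw [hcdef, hg]
      rw [real_inner_smul_right]
    have hf'xx : fderiv ℝ φ x x = c * ⟪n x, x⟫ := by
      rw [← aux_inner_gradient, hg, real_inner_smul_left]
    rw [inner_sub_left, real_inner_smul_left, real_inner_smul_left,
      aux_N_eq, hf'xx, hg, real_inner_smul_left, real_inner_smul_left,
      real_inner_smul_right, real_inner_comm (n x) x]
    linear_combination (c * (inner ℝ (n x) x : ℝ)) * hc
  -- conclude
  rw [MeasureTheory.setIntegral_congr_fun hfm hbd,
    MeasureTheory.integral_const_mul, hE2]
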